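/- Let 1 ≤ k ≤ n and let M = (M_{ij}) be an n × k integer matrix of rank k. Define φ : (ℂ∖{0})^k → (ℂ∖{0})ⁿ by φ(t)ᵢ := ∏_{j=1}^{k} t_j^{M_{ij}} (integer exponents). Then there exists c > 0, depending only on M, such that for every integer N ≥ 1 there exist finite sets X₁, …, Xₙ ⊆ ℂ∖{0} with |Xᵢ| ≤ N for all i and |{x ∈ X₁ × ⋯ × Xₙ : x lies in the image of φ}| ≥ c·N^{k}. -/

import Mathlib

noncomputable section

open Finset

private lemma two_zpow_sum {ι : Type*} (s : Finset ι) (f : ι → ℤ) :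
    (2:ℂ) ^ (∑ i ∈ s, f i) = ∏ i ∈ s, (2:ℂ) ^ f i := by
  classical
  induction s using Finset.induction with
  | empty => simp
  | @insert a s h ih =>
      rw [Finset.sum_insert h, Finset.prod_insert h, zpow_add₀ (by norm_num : (2:ℂ) ≠ 0), ih]

private lemma two_zpow_inj : Function.Injective fun e : ℤ => (2:ℂ) ^ e := by
  intro e f h
  simp only at h
  have h2 : ‖(2:ℂ) ^ e‖ = ‖(2:ℂ) ^ f‖ := by rw [h]
  rw [norm_zpow, norm_zpow] at h2
  norm_num at h2
  exact h2

private lemma rank_inj {n k : ℕ} (M : Matrix (Fin n) (Fin k) ℚ) (h : M.rank = k) :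
    Function.Injective M.mulVecLin := by
  rw [← LinearMap.ker_eq_bot]
  rw [← Submodule.finrank_eq_zero (R := ℚ)]
  have hrn := M.mulVecLin.finrank_range_add_finrank_ker
  have hdom : Module.finrank ℚ (Fin k → ℚ) = k := by simp
  rw [hdom] at hrn
  have : M.rank = Module.finrank ℚ (LinearMap.range M.mulVecLin) := rfl
  omega

/-- subtori admit no power-saving: let `M` be an `n × k` integer
matrix of rank `k` and let `φ : (ℂ∖{0})^k → (ℂ∖{0})ⁿ`, `φ(t)ᵢ = ∏ⱼ tⱼ^(M i j)`.
Then there is `c > 0` such that for every `N ≥ 1` there are finite sets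
`X₁, …, Xₙ ⊆ ℂ∖{0}` with `|Xᵢ| ≤ N` and at least `c·N^k` points of `X₁ × ⋯ × Xₙ`
lying in the image of `φ`. -/
theorem statement8 (n k : ℕ) (hk : 1 ≤ k) (hkn : k ≤ n)
    (M : Matrix (Fin n) (Fin k) ℤ)
    (hrank : (M.map (Int.cast : ℤ → ℚ)).rank = k) :
    ∃ c : ℝ, 0 < c ∧ ∀ N : ℕ, 1 ≤ N →
      ∃ X : Fin n → Set ℂ,
        (∀ i, (X i).Finite ∧ (X i).ncard ≤ N ∧ ∀ z ∈ X i, z ≠ 0) ∧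
        (({x : Fin n → ℂ | (∀ i, x i ∈ X i) ∧
            ∃ t : Fin k → ℂ, (∀ j, t j ≠ 0) ∧ ∀ i, x i = ∏ j, t j ^ (M i j)}).ncard : ℝ)
          ≥ c * (N : ℝ) ^ k := by
  classical
  set B : ℕ := 1 + ∑ i : Fin n, ∑ j : Fin k, (M i j).natAbs with hBdef
  have hB1 : 1 ≤ B := Nat.le_add_right 1 _
  have hBpos : 0 < B := hB1
  have hrow : ∀ i, (∑ j, ((M i j).natAbs : ℤ)) + 1 ≤ (B : ℤ) := by
    intro i
    have h1 : (∑ j, (M i j).natAbs) ≤ ∑ i' : Fin n, ∑ j : Fin k, (M i' j).natAbs :=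
      Finset.single_le_sum (f := fun i' => ∑ j, (M i' j).natAbs)
        (fun _ _ => Nat.zero_le _) (Finset.mem_univ i)
    have h2 : (∑ j, (M i j).natAbs) + 1 ≤ B := by omega
    exact_mod_cast h2
  refine ⟨(1 / (2 * B : ℝ)) ^ k, by positivity, ?_⟩
  intro N hN
  set m : ℕ := max 1 (N / B) with hmdef
  have hm1 : 1 ≤ m := le_max_left _ _
  -- key size bound
  have hBm : (B : ℤ) * ((m : ℤ) - 1) + 1 ≤ (N : ℤ) := by
    rcases Nat.eq_zero_or_pos (N / B) with h0 | h0
    · have hm : m = 1 := by rw [hmdef, h0]; exact max_eq_left (Nat.zero_le 1)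
      rw [hm]
      push_cast
      simpa using (by exact_mod_cast hN : (1:ℤ) ≤ N)
    · have hm : m = N / B := (max_eq_right h0).trans rfl
      have h2 : B * (N / B) ≤ N := Nat.mul_div_le N B
      have h2' : (B : ℤ) * (m : ℤ) ≤ (N : ℤ) := by rw [hm]; exact_mod_cast h2
      have hB1' : (1 : ℤ) ≤ (B : ℤ) := by exact_mod_cast hB1
      nlinarith
  -- lower bound m ≥ N / (2B)
  have hNm : (N : ℝ) ≤ 2 * B * m := by
    rcases lt_or_ge N (2 * B) with h | h
    · have : (N : ℝ) < 2 * B := by exact_mod_cast h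
      have h2 : (2 * B : ℝ) ≤ 2 * B * m := by
        have : (1:ℝ) ≤ m := by exact_mod_cast hm1
        nlinarith [mul_pos (by positivity : (0:ℝ) < 2 * B) (by norm_num : (0:ℝ) < 1)]
      linarith
    · have hq1 : 1 ≤ N / B := (Nat.one_le_div_iff hBpos).mpr (le_trans (by omega) h)
      have hm : m = N / B := max_eq_right hq1
      have hmod := Nat.div_add_mod N B
      have hmlt : N % B < B := Nat.mod_lt _ hBpos
      have hBq : B ≤ B * (N / B) := Nat.le_mul_of_pos_right B hq1
      have : N ≤ 2 * B * (N / B) := by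
        calc N = B * (N / B) + N % B := (hmod).symm
          _ ≤ B * (N / B) + B := by omega
          _ ≤ B * (N / B) + B * (N / B) := by omega
          _ = 2 * B * (N / B) := by ring
      rw [hm]
      exact_mod_cast this
  -- exponent windows
  set lo : Fin n → ℤ := fun i => ∑ j, min (M i j) (M i j * m) with hlo
  set hi : Fin n → ℤ := fun i => ∑ j, max (M i j) (M i j * m) with hhi
  have hdiff : ∀ i, hi i - lo i ≤ (B : ℤ) * ((m : ℤ) - 1) := by
    intro i
    rw [hhi, hlo, ← Finset.sum_sub_distrib]
    have hterm : ∀ j ∈ Finset.univ, max (M i j) (M i j * m) - min (M i j) (M i j * m)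
        ≤ ((M i j).natAbs : ℤ) * ((m : ℤ) - 1) := by
      intro j _
      rw [max_sub_min_eq_abs]
      have h1 : M i j * (m : ℤ) - M i j = M i j * ((m : ℤ) - 1) := by ring
      rw [h1, abs_mul]
      have h2 : |(m : ℤ) - 1| = (m : ℤ) - 1 := abs_of_nonneg (by
        have : (1:ℤ) ≤ (m:ℤ) := by exact_mod_cast hm1
        linarith)
      rw [h2, Int.abs_eq_natAbs]
    calc (∑ j, (max (M i j) (M i j * m) - min (M i j) (M i j * m)))
        ≤ ∑ j, ((M i j).natAbs : ℤ) * ((m : ℤ) - 1) := Finset.sum_le_sum hterm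
      _ = (∑ j, ((M i j).natAbs : ℤ)) * ((m : ℤ) - 1) := by rw [← Finset.sum_mul]
      _ ≤ (B : ℤ) * ((m : ℤ) - 1) := by
          have hmm : (0 : ℤ) ≤ (m : ℤ) - 1 := by
            have : (1:ℤ) ≤ m := by exact_mod_cast hm1
            linarith
          exact mul_le_mul_of_nonneg_right (by linarith [hrow i]) hmm
  have hXcard : ∀ i, (Finset.Icc (lo i) (hi i)).card ≤ N := by
    intro i
    rw [Int.card_Icc]
    rw [Int.toNat_le]
    have := hdiff i
    linarith [hBm]
  set X : Fin n → Set ℂ := fun i => ↑((Finset.Icc (lo i) (hi i)).image fun e => (2:ℂ) ^ e)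
    with hX
  refine ⟨X, ?_, ?_⟩
  · intro i
    refine ⟨Finset.finite_toSet _, ?_, ?_⟩
    · rw [Set.ncard_coe_finset]
      exact (Finset.card_image_le).trans (hXcard i)
    · intro z hz
      simp only [hX, Finset.coe_image, Set.mem_image, Finset.mem_coe] at hz
      obtain ⟨e, _, rfl⟩ := hz
      exact zpow_ne_zero _ (by norm_num)
  -- the point count
  set S : Set (Fin n → ℂ) := {x : Fin n → ℂ | (∀ i, x i ∈ X i) ∧
      ∃ t : Fin k → ℂ, (∀ j, t j ≠ 0) ∧ ∀ i, x i = ∏ j, t j ^ (M i j)} with hS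
  have hSfin : S.Finite := by
    apply Set.Finite.subset (Set.Finite.pi (fun i => Finset.finite_toSet _))
    intro x hx
    rw [Set.mem_pi]
    intro i _
    exact hx.1 i
  set g : (Fin k → ℤ) → (Fin n → ℂ) := fun a i => (2:ℂ) ^ (∑ j, M i j * a j) with hg
  have hginj : Function.Injective g := by
    intro a b hab
    have hexp : ∀ i, ∑ j, M i j * a j = ∑ j, M i j * b j := by
      intro i
      exact two_zpow_inj (congrFun hab i)
    have hinjQ := rank_inj _ hrank
    have hQ : (M.map (Int.cast : ℤ → ℚ)).mulVecLin (fun j => (a j : ℚ))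
        = (M.map (Int.cast : ℤ → ℚ)).mulVecLin (fun j => (b j : ℚ)) := by
      funext i
      simp only [Matrix.mulVecLin_apply, Matrix.mulVec, dotProduct, Matrix.map_apply]
      exact_mod_cast hexp i
    have := hinjQ hQ
    funext j
    exact_mod_cast congrFun this j
  set T : Finset (Fin k → ℤ) := Fintype.piFinset fun _ => Finset.Icc (1:ℤ) (m:ℤ) with hT
  have hTcard : T.card = m ^ k := by
    rw [hT, Fintype.card_piFinset]
    simp [Int.card_Icc]
  have hterm2 : ∀ (c e : ℤ), 1 ≤ e → e ≤ (m : ℤ) →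
      min c (c * m) ≤ c * e ∧ c * e ≤ max c (c * m) := by
    intro c e h1 h2
    rcases le_total 0 c with hc | hc
    · exact ⟨(min_le_left _ _).trans (by nlinarith), le_trans (by nlinarith) (le_max_right _ _)⟩
    · exact ⟨(min_le_right _ _).trans (by nlinarith), le_trans (by nlinarith) (le_max_left _ _)⟩
  have himg : ∀ a ∈ T, g a ∈ S := by
    intro a ha
    have hmem : ∀ j, 1 ≤ a j ∧ a j ≤ (m : ℤ) := by
      intro j
      have := Fintype.mem_piFinset.mp ha j
      rw [Finset.mem_Icc] at this
      exact this
    constructor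
    · intro i
      simp only [hX, Finset.coe_image, Set.mem_image, Finset.mem_coe]
      refine ⟨∑ j, M i j * a j, ?_, rfl⟩
      rw [Finset.mem_Icc, hlo, hhi]
      constructor
      · exact Finset.sum_le_sum fun j _ => (hterm2 _ _ (hmem j).1 (hmem j).2).1
      · exact Finset.sum_le_sum fun j _ => (hterm2 _ _ (hmem j).1 (hmem j).2).2
    · refine ⟨fun j => (2:ℂ) ^ (a j), fun j => zpow_ne_zero _ (by norm_num), ?_⟩
      intro i
      rw [hg]
      simp only
      rw [two_zpow_sum]
      apply Finset.prod_congr rfl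
      intro j _
      rw [mul_comm (M i j) (a j), zpow_mul]
  have hcount : ((m : ℝ)) ^ k ≤ (S.ncard : ℝ) := by
    have h1 : (T.image g).card = T.card := Finset.card_image_of_injective _ hginj
    have h2 : (↑(T.image g) : Set (Fin n → ℂ)) ⊆ S := by
      intro x hx
      simp only [Finset.coe_image, Set.mem_image, Finset.mem_coe] at hx
      obtain ⟨a, ha, rfl⟩ := hx
      exact himg a ha
    have h3 := Set.ncard_le_ncard h2 hSfin
    rw [Set.ncard_coe_finset, h1, hTcard] at h3
    exact_mod_cast h3
  have hfrac : (N : ℝ) / (2 * B) ≤ (m : ℝ) := by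
    rw [div_le_iff₀ (by positivity)]
    nlinarith
  calc ((S.ncard : ℝ)) ≥ ((m : ℝ)) ^ k := hcount
    _ ≥ ((N : ℝ) / (2 * B)) ^ k := by
        apply pow_le_pow_left₀ (by positivity) hfrac
    _ = (1 / (2 * B : ℝ)) ^ k * (N : ℝ) ^ k := by
        rw [div_pow, one_div, inv_pow]
        ring
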